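/- Let $\eta, k, r, \lambda$ be integers with $k > r \geq \lambda \geq 0$ and $k-1 > \lambda$, and let $0 < \alpha_1 < \cdots < \alpha_\lambda < \eta$ with $\alpha_i = \eta - \alpha_{\lambda+1-i}$. Let $\pi$ be an overpartition satisfying conditions (1)-(4) of the class $\overline{B}_0$ (parts congruent to $0, \alpha_1, \ldots, \alpha_\lambda \pmod{\eta}$; only multiples of $\eta$ may be non-overlined; difference-at-distance-$k-1$ condition; at most $r$ parts not exceeding $\eta$). If there exists an index $i$ with $1 \leq i \leq \ell - k + 2$ such that $\pi_i < \overline{2\eta}$ and $\pi_i \leq \pi_{i+k-2} + \eta$ (strict if $\pi_i$ is overlined), then $[|\pi_i|/\eta] + \cdots + [|\pi_{i+k-2}|/\eta] \equiv f_{\leq \eta}(\pi) + \overline{V}_\pi(\pi_i) \pmod{2}$, where $f_{\leq \eta}(\pi)$ counts parts of $\pi$ not exceeding $\eta$, and $\overline{V}_\pi(\pi_i)$ counts overlined parts not exceeding $\pi_i$ that are not divisible by $\eta$. -/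

import Mathlib

/-- A part of an overpartition: a size together with a flag telling
whether the part is overlined. -/
structure OPart where
  size : ℕ
  overlined : Bool
deriving DecidableEq

/-- The value of a part in the ordering `1̄ < 1 < 2̄ < 2 < ⋯`:
an overlined part of size `t` has value `2t - 1`, a non-overlined one `2t`. -/
def OPart.val (p : OPart) : ℕ := 2 * p.size - (if p.overlined then 1 else 0)

def dpart : OPart := ⟨0, false⟩

/-- value of the `i`-th part (0-based). -/
def pval (π : List OPart) (i : ℕ) : ℕ := (π.getD i dpart).val

def pover (π : List OPart) (i : ℕ) : Bool := (π.getD i dpart).overlined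

def psize (π : List OPart) (i : ℕ) : ℕ := (π.getD i dpart).size

/-- the weight `|π|`: the sum of the sizes of the parts. -/
def wt (π : List OPart) : ℕ := (π.map OPart.size).sum

/-- An overpartition: a sequence of positive parts, non-increasing in the
ordering `1̄ < 1 < 2̄ < 2 < ⋯`, in which each size is overlined at most once
(the overlined copy, being smallest among equal sizes, is the last occurrence). -/
def IsOverPartition (π : List OPart) : Prop :=
  List.Pairwise (fun p q : OPart => q.val ≤ p.val) π ∧
  (∀ p ∈ π, 0 < p.size) ∧
  (∀ t : ℕ, π.count (⟨t, true⟩ : OPart) ≤ 1)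

/-- `{π_{i+l}}_{0 ≤ l ≤ m-1}` is an `m`-band of `π`:
`π_i ≤ π_{i+m-1} + η`, with strict inequality if `π_i` is overlined. -/
def IsBand (η : ℕ) (π : List OPart) (m i : ℕ) : Prop :=
  i + m ≤ π.length ∧
  pval π i ≤ pval π (i + m - 1) + 2 * η ∧
  (pover π i = true → pval π i < pval π (i + m - 1) + 2 * η)

/-- `V̄_π(N)`: the number of overlined parts of value at most `N`
whose size is not divisible by `η`. -/
def Vbar (η : ℕ) (π : List OPart) (N : ℕ) : ℕ :=
  π.countP (fun p => p.overlined && decide (p.val ≤ N) && !(decide (p.size % η = 0)))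

/-- `Ō_π(N)`: the number of overlined parts of value at least `N`
whose size is divisible by `η`. -/
def Obar (η : ℕ) (π : List OPart) (N : ℕ) : ℕ :=
  π.countP (fun p => p.overlined && decide (N ≤ p.val) && decide (p.size % η = 0))

/-- `f_{≤η}(π)`: the number of parts not exceeding `η`. -/
def fLe (η : ℕ) (π : List OPart) : ℕ :=
  π.countP (fun p => decide (p.val ≤ 2 * η))

/-- `[|π_i|/η] + ⋯ + [|π_{i+m-1}|/η]`. -/
def bandSum (η : ℕ) (π : List OPart) (i m : ℕ) : ℕ :=
  ∑ l ∈ Finset.range m, psize π (i + l) / η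

/-- Every part is congruent to `0, α_1, …, α_λ` modulo `η`. -/
def CongParts (α : ℕ → ℕ) (lam η : ℕ) (π : List OPart) : Prop :=
  ∀ p ∈ π, p.size % η = 0 ∨ ∃ s, 1 ≤ s ∧ s ≤ lam ∧ p.size % η = α s

/-- The class `B̄(α_1,…,α_λ; η, k, r)`: conditions (1)–(4) of the definition
of `B̄₀`. -/
def InBbar (α : ℕ → ℕ) (lam η k r : ℕ) (π : List OPart) : Prop :=
  IsOverPartition π ∧
  CongParts α lam η π ∧
  (∀ p ∈ π, p.overlined = false → η ∣ p.size) ∧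
  (∀ i, i + k ≤ π.length →
    pval π (i + k - 1) + 2 * η ≤ pval π i ∧
    (pover π i = false → pval π (i + k - 1) + 2 * η < pval π i)) ∧
  fLe η π ≤ r

/-- An `m`-band at `i` is even:
`[|π_i|/η]+⋯+[|π_{i+m-1}|/η] ≡ r - 1 + V̄_π(π_i) + Ō_π(π_{i+m-1}) (mod 2)`. -/
def EvenBand (η r : ℕ) (π : List OPart) (m i : ℕ) : Prop :=
  Int.ModEq 2 (bandSum η π i m)
    ((r : ℤ) - 1 + (Vbar η π (pval π i) : ℤ) + (Obar η π (pval π (i + m - 1)) : ℤ))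

/-- Condition (5) of the definition of `B̄₀`. -/
def Cond5 (η k r : ℕ) (π : List OPart) : Prop :=
  fLe η π = r → (⟨η, true⟩ : OPart) ∉ π →
    ∃ i, IsBand η π (k - 1) i ∧ pval π i < 2 * (2 * η) - 1

/-- The class `B̄₀(α_1,…,α_λ; η, k, r)`: conditions (1)–(6). -/
def InB0 (α : ℕ → ℕ) (lam η k r : ℕ) (π : List OPart) : Prop :=
  InBbar α lam η k r π ∧ Cond5 η k r π ∧
  ∀ i, IsBand η π (k - 1) i → EvenBand η r π (k - 1) i

/-- `s(π) > t̄η`: every overlined part divisible by `η` has size `> tη`. -/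
def SGt (η t : ℕ) (π : List OPart) : Prop :=
  ∀ p ∈ π, p.overlined = true → η ∣ p.size → t * η < p.size

/-- `s(π) = t̄η`. -/
def SEq (η t : ℕ) (π : List OPart) : Prop :=
  (⟨t * η, true⟩ : OPart) ∈ π ∧
  ∀ p ∈ π, p.overlined = true → η ∣ p.size → t * η ≤ p.size

/-- `g(π) ≥ x` (value `x`): every part starting a `(k-1)`-band has value `≥ x`. -/
def GGe (η k : ℕ) (π : List OPart) (x : ℕ) : Prop :=
  ∀ i, IsBand η π (k - 1) i → x ≤ pval π i

/-- `g(π) < x`: some part starting a `(k-1)`-band has value `< x`. -/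
def GLt (η k : ℕ) (π : List OPart) (x : ℕ) : Prop :=
  ∃ i, IsBand η π (k - 1) i ∧ pval π i < x

/-- `π ∈ B̄₀^=(α_1,…,α_λ; η,k,r | t)`. -/
def InBeq (α : ℕ → ℕ) (lam η k r t : ℕ) (π : List OPart) : Prop :=
  InB0 α lam η k r π ∧
  ((SEq η t π ∧ GGe η k π (2 * (t * η) - 1)) ∨
   (SGt η t π ∧ GGe η k π (2 * (t * η)) ∧ GLt η k π (2 * ((t + 1) * η) - 1)))

/-- `π ∈ B̄₀^>(α_1,…,α_λ; η,k,r | t)`. -/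
def InBgt (α : ℕ → ℕ) (lam η k r t : ℕ) (π : List OPart) : Prop :=
  InB0 α lam η k r π ∧ SGt η t π ∧ GGe η k π (2 * ((t + 1) * η) - 1)

/-- An `m`-band belonging to the closed interval `[(t-1)η, (t+1)η]`. -/
def BandInC (η t : ℕ) (π : List OPart) (m i : ℕ) : Prop :=
  IsBand η π m i ∧ 2 * ((t - 1) * η) ≤ pval π (i + m - 1) ∧
  pval π i ≤ 2 * ((t + 1) * η)

/-- An `m`-band belonging to `[(t-1)η, \overline{(t+1)η})`. -/
def BandInO (η t : ℕ) (π : List OPart) (m i : ℕ) : Prop :=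
  IsBand η π m i ∧ 2 * ((t - 1) * η) ≤ pval π (i + m - 1) ∧
  pval π i < 2 * ((t + 1) * η) - 1

/-- An `m`-band at `i` is of type N. -/
def TypeN (η r t : ℕ) (π : List OPart) (m i : ℕ) : Prop :=
  Int.ModEq 2 (bandSum η π i m)
    ((t : ℤ) + (r : ℤ) - 1 + (Vbar η π (pval π i) : ℤ) +
      (Obar η π (pval π (i + m - 1)) : ℤ))

/-- `π` is obtained from `μ` by inserting the part `p`. -/
def InsertPart (μ : List OPart) (p : OPart) (π : List OPart) : Prop :=
  ∃ l1 l2, μ = l1 ++ l2 ∧ π = l1 ++ p :: l2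

/-- The `(k-1)`-reduction `D_t` as a relation: `μ = D_t(π)`. -/
def DtRel (η t : ℕ) (π μ : List OPart) : Prop :=
  ((⟨t * η, true⟩ : OPart) ∈ π ∧ InsertPart μ ⟨t * η, true⟩ π) ∨
  ((⟨t * η, true⟩ : OPart) ∉ π ∧ InsertPart μ ⟨t * η, false⟩ π)

/-- `μ` has a `(k-2)`-band belonging to `[(t-1)η, \overline{(t+1)η})` of type N. -/
def HasTypeNBand (η r k t : ℕ) (μ : List OPart) : Prop :=
  ∃ i, BandInO η t μ (k - 2) i ∧ TypeN η r t μ (k - 2) i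

/-- The `(k-1)`-augmentation `C_t` as a relation: `π = C_t(μ)`. -/
def CtRel (η r k t : ℕ) (μ π : List OPart) : Prop :=
  (HasTypeNBand η r k t μ ∧ InsertPart μ ⟨t * η, false⟩ π) ∨
  (¬ HasTypeNBand η r k t μ ∧ InsertPart μ ⟨t * η, true⟩ π)

/-- `B₁`-type overpartitions: conditions (1)–(4), no overlined part divisible
by `η`, and at most `r - 1` parts not exceeding `η`. -/
def InB1over (α : ℕ → ℕ) (lam η k r : ℕ) (π : List OPart) : Prop :=
  InBbar α lam η k r π ∧ (∀ p ∈ π, p.overlined = true → ¬ η ∣ p.size) ∧ fLe η π < r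

/-- `D_η`: partitions into distinct parts divisible by `η`. -/
def InD (η : ℕ) (τ : List ℕ) : Prop :=
  List.Pairwise (· > ·) τ ∧ ∀ x ∈ τ, 0 < x ∧ η ∣ x

/-- Bressoud's class `B₁(α_1,…,α_λ; η,k,r)` of ordinary partitions. -/
def InB1nat (α : ℕ → ℕ) (lam η k r : ℕ) (σ : List ℕ) : Prop :=
  List.Pairwise (· ≥ ·) σ ∧ (∀ x ∈ σ, 0 < x) ∧
  (∀ x ∈ σ, x % η = 0 ∨ ∃ s, 1 ≤ s ∧ s ≤ lam ∧ x % η = α s) ∧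
  (∀ x : ℕ, ¬ η ∣ x → σ.count x ≤ 1) ∧
  (∀ i, i + k ≤ σ.length →
    σ.getD (i + k - 1) 0 + η ≤ σ.getD i 0 ∧
    (η ∣ σ.getD i 0 → σ.getD (i + k - 1) 0 + η < σ.getD i 0)) ∧
  σ.countP (fun x => decide (x ≤ η)) < r

/-- The class `Ā₀(α_1,…,α_λ; η,k,r)`. Congruence conditions involving `η/2`
are stated with sizes doubled. -/
def InA0 (α : ℕ → ℕ) (lam η k r : ℕ) (π : List OPart) : Prop :=
  IsOverPartition π ∧
  CongParts α lam η π ∧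
  (Even lam →
    ∀ p ∈ π, p.overlined = false →
      η ∣ p.size ∧
      ¬ (2 * η * (2 * k - lam - 1) ∣ 2 * p.size) ∧
      2 * p.size % (2 * η * (2 * k - lam - 1)) ≠ η * (2 * r - lam) ∧
      2 * p.size % (2 * η * (2 * k - lam - 1)) ≠
        2 * η * (2 * k - lam - 1) - η * (2 * r - lam)) ∧
  (¬ Even lam →
    (∀ p ∈ π, p.overlined = false →
      η ∣ 2 * p.size ∧
      p.size % (2 * η) ≠ η ∧
      ¬ (2 * η * (2 * k - lam - 1) ∣ 2 * p.size) ∧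
      2 * p.size % (2 * η * (2 * k - lam - 1)) ≠ η * (2 * r - lam) ∧
      2 * p.size % (2 * η * (2 * k - lam - 1)) ≠
        2 * η * (2 * k - lam - 1) - η * (2 * r - lam)) ∧
    (∀ p ∈ π, p.overlined = true → 2 * p.size % (2 * η) ≠ η))


lemma countP_sum_range (l : List OPart) (p : OPart → Bool) :
    l.countP p = ∑ j ∈ Finset.range l.length, (if p (l.getD j dpart) then 1 else 0) := by
  induction l with
  | nil => simp
  | cons a t ih =>
    rw [List.countP_cons, List.length_cons, Finset.sum_range_succ']
    simp [ih]

lemma two_le_count (l : List OPart) (x : OPart) (j1 j2 : ℕ) (h12 : j1 < j2)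
    (h2 : j2 < l.length) (e1 : l.getD j1 dpart = x) (e2 : l.getD j2 dpart = x) :
    2 ≤ l.count x := by
  have h1 : j1 < l.length := h12.trans h2
  rw [List.count_eq_countP, countP_sum_range]
  have hsub : ({j1, j2} : Finset ℕ) ⊆ Finset.range l.length := by
    intro a ha
    simp only [Finset.mem_insert, Finset.mem_singleton] at ha
    rcases ha with rfl | rfl <;> simp [h1, h2]
  calc (2:ℕ) = ∑ j ∈ ({j1, j2} : Finset ℕ),
        (if (l.getD j dpart == x) = true then 1 else 0) := by
        rw [Finset.sum_pair h12.ne, e1, e2]; simp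
    _ ≤ _ := Finset.sum_le_sum_of_subset hsub

theorem stmt_0 (α : ℕ → ℕ) (lam η k r : ℕ)
    (hη : 0 < η)
    (hαpos : ∀ i, 1 ≤ i → i ≤ lam → 0 < α i ∧ α i < η)
    (hαmono : ∀ i j, 1 ≤ i → i < j → j ≤ lam → α i < α j)
    (hαsym : ∀ i, 1 ≤ i → i ≤ lam → α i = η - α (lam + 1 - i))
    (hrk : r < k) (hlr : lam ≤ r) (hlk : lam + 1 < k)
    (π : List OPart) (hπ : InBbar α lam η k r π)
    (i : ℕ) (hband : IsBand η π (k - 1) i)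
    (hlt : pval π i < 2 * (2 * η) - 1) :
    Int.ModEq 2 (bandSum η π i (k - 1))
      ((fLe η π : ℤ) + (Vbar η π (pval π i) : ℤ)) := by
  obtain ⟨⟨hsort, hpos, hcount⟩, hcong, hover, hdiff, hfler⟩ := hπ
  obtain ⟨hlen, hb1, hb2⟩ := hband
  have hk2 : 2 ≤ k := by omega
  set ℓ := π.length with hℓ
  have hm1 : 1 ≤ k - 1 := by omega
  have hiℓ : i < ℓ := by omega
  have hmem : ∀ j, j < ℓ → π.getD j dpart ∈ π := by
    intro j hj
    rw [List.getD_eq_getElem π dpart hj]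
    exact List.getElem_mem _
  have hsz : ∀ j, j < ℓ → 1 ≤ psize π j := fun j hj => hpos _ (hmem j hj)
  have hval : ∀ j, pval π j = 2 * psize π j - (if pover π j = true then 1 else 0) :=
    fun _ => rfl
  have hmono : ∀ j1 j2, j1 ≤ j2 → j2 < ℓ → pval π j2 ≤ pval π j1 := by
    intro j1 j2 h12 h2
    have h1 : j1 < ℓ := lt_of_le_of_lt h12 h2
    unfold pval
    rw [List.getD_eq_getElem π dpart h1, List.getD_eq_getElem π dpart h2]
    rcases eq_or_lt_of_le h12 with rfl | h
    · exact le_refl _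
    · exact (List.pairwise_iff_getElem.mp hsort) j1 j2 h1 h2 h
  have hvpos : ∀ j, j < ℓ → 1 ≤ pval π j := by
    intro j hj
    have h1 := hsz j hj
    rw [hval j]
    split <;> omega
  have hover' : ∀ j, j < ℓ → pover π j = false → psize π j % η = 0 :=
    fun j hj h => Nat.mod_eq_zero_of_dvd (hover _ (hmem j hj) h)
  -- Parts before index i
  have hA1 : ∀ j, j < i → ¬ pval π j ≤ 2 * η := by
    intro j hj hle
    have hjk : j + k ≤ ℓ := by omega
    have h4 := (hdiff j hjk).1
    have h5 := hvpos (j + k - 1) (by omega)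
    omega
  have hA2 : ∀ j, j < i →
      ¬ (pover π j = true ∧ pval π j ≤ pval π i ∧ ¬ psize π j % η = 0) := by
    rintro j hj ⟨ho, hle, _⟩
    have hge := hmono j i (le_of_lt hj) hiℓ
    have heq : pval π j = pval π i := le_antisymm hle hge
    have hsj := hsz j (by omega)
    have hsi := hsz i hiℓ
    have hvj := hval j
    have hvi := hval i
    rw [if_pos ho] at hvj
    have hoi : pover π i = true := by
      rcases Bool.eq_false_or_eq_true (pover π i) with h | h
      · exact h
      · rw [if_neg (by simp [h])] at hvi; omega
    rw [if_pos hoi] at hvi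
    have hseq : psize π j = psize π i := by omega
    have hx : π.getD j dpart = ⟨psize π i, true⟩ := by
      rw [show π.getD j dpart = (⟨psize π j, pover π j⟩ : OPart) from rfl, hseq, ho]
    have hy : π.getD i dpart = ⟨psize π i, true⟩ := by
      rw [show π.getD i dpart = (⟨psize π i, pover π i⟩ : OPart) from rfl, hoi]
    have h2c := two_le_count π ⟨psize π i, true⟩ j i hj hiℓ hx hy
    have := hcount (psize π i)
    omega
  have hN4 : pval π i ≤ 4 * η - 2 := by omega
  -- Parts after the band
  have htail : ∀ j, i + (k-1) ≤ j → j < ℓ →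
      (pval π j ≤ 2 * η) ∧
      (pover π j = true ∧ pval π j ≤ pval π i ∧ ¬ psize π j % η = 0) := by
    intro j hj1 hj2
    have hik : i + k ≤ ℓ := by omega
    have h4 := (hdiff i hik).1
    have hle : pval π j ≤ pval π (i + k - 1) := hmono _ j (by omega) hj2
    have hv2 : pval π j ≤ 2 * η - 2 := by omega
    have hvj := hval j
    have hszj := hsz j hj2
    have ho01 : (if pover π j = true then 1 else 0) ≤ 1 := by split <;> omega
    have hsmall : psize π j < η := by omega
    have hmd : psize π j % η = psize π j := Nat.mod_eq_of_lt hsmall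
    have hov : pover π j = true := by
      rcases Bool.eq_false_or_eq_true (pover π j) with h | h
      · exact h
      · have := hover' j hj2 h; omega
    exact ⟨by omega, hov, hmono i j (by omega) hj2, by omega⟩
  -- Parts in the band
  have hBand : ∀ j, i ≤ j → j < i + (k-1) →
      psize π j / η + ((if pval π j ≤ 2*η then 1 else 0) +
        (if (pover π j = true ∧ pval π j ≤ pval π i ∧ ¬ psize π j % η = 0)
          then 1 else 0)) = 2 := by
    intro j hj1 hj2
    have hjℓ : j < ℓ := by omega
    have hle : pval π j ≤ pval π i := hmono i j hj1 hjℓ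
    have hvj := hval j
    have hszj := hsz j hjℓ
    have hsize_eq_eta : ∀ c : ℕ, psize π j = η * c → psize π j ≤ 2*η - 1 →
        psize π j = η := by
      intro c hc hup
      rcases Nat.lt_or_ge c 2 with h | h
      · interval_cases c <;> omega
      · exfalso
        have h2 : η * 2 ≤ η * c := Nat.mul_le_mul_left η h
        omega
    rcases Bool.eq_false_or_eq_true (pover π j) with hov | hov
    · -- overlined
      rw [if_pos hov] at hvj
      have hs2 : psize π j ≤ 2*η - 1 := by omega
      by_cases hd : psize π j % η = 0
      · obtain ⟨c, hc⟩ := Nat.dvd_of_mod_eq_zero hd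
        have hsη : psize π j = η := hsize_eq_eta c hc hs2
        rw [if_pos (by omega), if_neg (by rintro ⟨-, -, h⟩; exact h hd), hsη,
          Nat.div_self hη]
      · by_cases hsη : psize π j < η
        · rw [Nat.div_eq_of_lt hsη, if_pos (by omega), if_pos ⟨hov, hle, hd⟩]
        · have hgt : η < psize π j := by
            rcases Nat.lt_or_ge η (psize π j) with h | h
            · exact h
            · exfalso; apply hd
              have he : psize π j = η := by omega
              rw [he, Nat.mod_self]
          have hdiv1 : psize π j / η = 1 := by
            apply Nat.div_eq_of_lt_le <;> omega
          rw [hdiv1, if_neg (by omega), if_pos ⟨hov, hle, hd⟩]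
    · -- non-overlined: size = η
      rw [if_neg (by simp [hov])] at hvj
      have hd := hover' j hjℓ hov
      obtain ⟨c, hc⟩ := Nat.dvd_of_mod_eq_zero hd
      have hs2 : psize π j ≤ 2*η - 1 := by omega
      have hsη : psize π j = η := hsize_eq_eta c hc hs2
      rw [if_pos (by omega),
        if_neg (by rw [hov]; rintro ⟨h, -⟩; exact absurd h (by simp)), hsη,
        Nat.div_self hη]
  -- rewrite the three quantities as sums
  have hflesum : fLe η π = ∑ j ∈ Finset.range ℓ,
      (if pval π j ≤ 2*η then 1 else 0) := by
    rw [fLe, countP_sum_range]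
    exact Finset.sum_congr rfl fun j _ => by simp [pval]
  have hvbarsum : Vbar η π (pval π i) = ∑ j ∈ Finset.range ℓ,
      (if (pover π j = true ∧ pval π j ≤ pval π i ∧ ¬ psize π j % η = 0)
        then 1 else 0) := by
    rw [Vbar, countP_sum_range]
    refine Finset.sum_congr rfl fun j _ => ?_
    by_cases h : pover π j = true ∧ pval π j ≤ pval π i ∧ ¬ psize π j % η = 0
    · rw [if_pos h, if_pos]
      obtain ⟨h1, h2, h3⟩ := h
      simp only [Bool.and_eq_true, Bool.not_eq_true', decide_eq_true_eq,
        decide_eq_false_iff_not]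
      exact ⟨⟨h1, h2⟩, h3⟩
    · rw [if_neg h, if_neg]
      intro hc
      apply h
      simp only [Bool.and_eq_true, Bool.not_eq_true', decide_eq_true_eq,
        decide_eq_false_iff_not] at hc
      exact ⟨hc.1.1, hc.1.2, hc.2⟩
  have hbs : bandSum η π i (k-1) = ∑ j ∈ Finset.Ico i (i + (k-1)), psize π j / η := by
    rw [bandSum, Finset.sum_Ico_eq_sum_range]
    have h : i + (k-1) - i = k-1 := by omega
    rw [h]
  have key : bandSum η π i (k-1) + (fLe η π + Vbar η π (pval π i)) =
      ∑ _j ∈ Finset.Ico i (i+(k-1)), 2 + ∑ _j ∈ Finset.Ico (i+(k-1)) ℓ, 2 := by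
    have hsum : fLe η π + Vbar η π (pval π i) = ∑ j ∈ Finset.range ℓ,
        ((if pval π j ≤ 2*η then 1 else 0) +
         (if (pover π j = true ∧ pval π j ≤ pval π i ∧ ¬ psize π j % η = 0)
           then 1 else 0)) := by
      rw [hflesum, hvbarsum, Finset.sum_add_distrib]
    rw [hsum, hbs, Finset.range_eq_Ico,
      ← Finset.sum_Ico_consecutive _ (Nat.zero_le i) (show i ≤ ℓ by omega),
      ← Finset.sum_Ico_consecutive _ (show i ≤ i+(k-1) by omega)
        (show i+(k-1) ≤ ℓ from hlen)]
    have e0 : ∑ j ∈ Finset.Ico 0 i, ((if pval π j ≤ 2*η then 1 else 0) +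
        (if (pover π j = true ∧ pval π j ≤ pval π i ∧ ¬ psize π j % η = 0)
          then 1 else 0)) = 0 := by
      refine Finset.sum_eq_zero fun j hj => ?_
      rw [Finset.mem_Ico] at hj
      rw [if_neg (hA1 j hj.2), if_neg (hA2 j hj.2)]
      rfl
    have e2 : ∑ j ∈ Finset.Ico (i+(k-1)) ℓ, ((if pval π j ≤ 2*η then 1 else 0) +
        (if (pover π j = true ∧ pval π j ≤ pval π i ∧ ¬ psize π j % η = 0)
          then 1 else 0)) = ∑ _j ∈ Finset.Ico (i+(k-1)) ℓ, 2 := by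
      refine Finset.sum_congr rfl fun j hj => ?_
      rw [Finset.mem_Ico] at hj
      obtain ⟨t1, t2⟩ := htail j hj.1 hj.2
      rw [if_pos t1, if_pos t2]
    have e1 : ∑ j ∈ Finset.Ico i (i+(k-1)), psize π j / η +
        ∑ j ∈ Finset.Ico i (i+(k-1)), ((if pval π j ≤ 2*η then 1 else 0) +
        (if (pover π j = true ∧ pval π j ≤ pval π i ∧ ¬ psize π j % η = 0)
          then 1 else 0)) = ∑ _j ∈ Finset.Ico i (i+(k-1)), 2 := by
      rw [← Finset.sum_add_distrib]
      refine Finset.sum_congr rfl fun j hj => ?_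
      rw [Finset.mem_Ico] at hj
      exact hBand j hj.1 hj.2
    rw [e0, e2]
    omega
  have heven : (bandSum η π i (k-1) + (fLe η π + Vbar η π (pval π i))) % 2 = 0 := by
    rw [key]
    simp only [Finset.sum_const, smul_eq_mul]
    omega
  unfold Int.ModEq
  omega
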